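/- Let $d$ be a circular decomposable metric on $X = \{1,\dots,n\}$. For any $a \neq c$: $d(a,c-1) \leq d(a,c)$ if and only if $\modtwosum_{i=a+1}^{c} \alpha_{ic} \leq \modtwosum_{i=c+1}^{a} \alpha_{ic}$, where all index arithmetic is cyclic mod $n$. -/
import Mathlib


open Finset

/-- Position of `b` relative to `a` in the clockwise cyclic order on `ZMod n`
(number of clockwise steps from `a` to `b`). -/
def cpos {n : ℕ} (a b : ZMod n) : ℕ := (b - a).val

/-- `a ≺ b ≺ c` in the cyclic order. -/
def btwSS {n : ℕ} (a b c : ZMod n) : Prop := 0 < cpos a b ∧ cpos a b < cpos a c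

/-- `a ≺ b ⪯ c` in the cyclic order. -/
def btwSW {n : ℕ} (a b c : ZMod n) : Prop := 0 < cpos a b ∧ cpos a b ≤ cpos a c

/-- `a ⪯ b ≺ c` in the cyclic order. -/
def btwWS {n : ℕ} (a b c : ZMod n) : Prop := cpos a b < cpos a c

/-- `a ⪯ b ⪯ c` in the cyclic order. -/
def btwWW {n : ℕ} (a b c : ZMod n) : Prop := cpos a b ≤ cpos a c

/-- Circular sum `⊕∑_{i=a}^{b} f i`: the sum of `f` over the indices from `a` to `b`
inclusive, traversed cyclically (wrapping around mod `n`). -/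
noncomputable def csum {n : ℕ} (f : ZMod n → ℝ) (a b : ZMod n) : ℝ :=
  ∑ k ∈ Finset.range ((b - a).val + 1), f (a + (k : ZMod n))

/-- The circular decomposable metric determined by isolation indices `α`:
`d a b = ⊕∑_{i=a+1}^{b} ⊕∑_{j=b+1}^{a} α i j` for `a ≠ b`, and `d a a = 0`. -/
noncomputable def dd {n : ℕ} (α : ZMod n → ZMod n → ℝ) (a b : ZMod n) : ℝ :=
  if a = b then 0 else csum (fun i => csum (fun j => α i j) (b + 1) a) (a + 1) b

/-- For `a ≠ c`: `d(a,c-1) ≤ d(a,c)` iff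
`⊕∑_{i=a+1}^{c} α i c ≤ ⊕∑_{i=c+1}^{a} α i c`. -/
lemma val_sub_one {n : ℕ} [NeZero n] (x : ZMod n) (hx : x ≠ 0) :
    (x - 1).val = x.val - 1 := by
  have h1 : 1 ≤ x.val := Nat.one_le_iff_ne_zero.mpr (fun h => hx ((ZMod.val_eq_zero x).mp h))
  have hxx : ((x.val : ℕ) : ZMod n) = x := ZMod.natCast_rightInverse x
  have h : x - 1 = ((x.val - 1 : ℕ) : ZMod n) := by
    push_cast [Nat.cast_sub h1]
    rw [hxx]
  rw [h, ZMod.val_cast_of_lt (by have := ZMod.val_lt x; omega)]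

lemma dd_eq {n : ℕ} [NeZero n] (α : ZMod n → ZMod n → ℝ) (a b : ZMod n) (hab : a ≠ b) :
    dd α a b = ∑ k ∈ range (b - a).val, ∑ l ∈ range (n - (b - a).val),
      α (a + 1 + (k : ZMod n)) (b + 1 + (l : ZMod n)) := by
  have hba : b - a ≠ 0 := sub_ne_zero.mpr (Ne.symm hab)
  have hm1 : 1 ≤ (b - a).val := Nat.one_le_iff_ne_zero.mpr
    (fun h => hba ((ZMod.val_eq_zero _).mp h))
  have hmn : (b - a).val < n := ZMod.val_lt _
  have hab' : a - b ≠ 0 := sub_ne_zero.mpr hab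
  have e4 : (a - b).val = n - (b - a).val := by
    have h : a - b = -(b - a) := by ring
    rw [h, ZMod.neg_val, if_neg hba]
  have h1 : (b - (a + 1)).val + 1 = (b - a).val := by
    have h : b - (a + 1) = (b - a) - 1 := by ring
    rw [h, val_sub_one _ hba]; omega
  have h2 : (a - (b + 1)).val + 1 = n - (b - a).val := by
    have h : a - (b + 1) = (a - b) - 1 := by ring
    rw [h, val_sub_one _ hab', e4]; omega
  simp only [dd, if_neg hab, csum, h1, h2]

lemma key {n : ℕ} [NeZero n] (α : ZMod n → ZMod n → ℝ)
    (hsym : ∀ i j, α i j = α j i) (hdiag : ∀ i, α i i = 0)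
    (a c : ZMod n) (hac : a ≠ c) :
    dd α a c = dd α a (c - 1) + csum (fun i => α i c) (c + 1) a
      - csum (fun i => α i c) (a + 1) c := by
  have hca : c - a ≠ 0 := sub_ne_zero.mpr (Ne.symm hac)
  have hm1 : 1 ≤ (c - a).val := Nat.one_le_iff_ne_zero.mpr
    (fun h => hca ((ZMod.val_eq_zero _).mp h))
  have hmn : (c - a).val < n := ZMod.val_lt _
  obtain ⟨p, hp⟩ : ∃ p, (c - a).val = p + 1 := ⟨(c - a).val - 1, by omega⟩
  have hpn : p + 1 < n := hp ▸ hmn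
  have hcm : ((p + 1 : ℕ) : ZMod n) = c - a := by
    rw [← hp]; exact ZMod.natCast_rightInverse _
  have hlast : a + 1 + ((p : ℕ) : ZMod n) = c := by
    have h : a + 1 + ((p : ℕ) : ZMod n) = a + ((p + 1 : ℕ) : ZMod n) := by push_cast; ring
    rw [h, hcm]; ring
  have D0 : dd α a c = ∑ k ∈ range (p + 1), ∑ l ∈ range (n - (p + 1)),
      α (a + 1 + (k : ZMod n)) (c + 1 + (l : ZMod n)) := by
    rw [dd_eq α a c hac, hp]
  have D1 : dd α a (c - 1) = ∑ k ∈ range p, ∑ l ∈ range (n - (p + 1) + 1),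
      α (a + 1 + (k : ZMod n)) (c + (l : ZMod n)) := by
    rcases eq_or_ne a (c - 1) with h | h
    · have hp0 : p = 0 := by
        have h1 : c - a = 1 := by rw [h]; ring
        haveI : Fact (1 < n) := ⟨by omega⟩
        have := hp
        rw [h1, ZMod.val_one] at this
        omega
      simp [dd, ← h, hp0]
    · rw [dd_eq α a (c - 1) h]
      have e1 : (c - 1 - a).val = p := by
        have hh : c - 1 - a = (c - a) - 1 := by ring
        rw [hh, val_sub_one _ hca, hp]; omega
      have e2 : c - 1 + 1 = c := by ring
      have e3 : n - p = n - (p + 1) + 1 := by omega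
      rw [e1, e2, e3]
  have C1 : csum (fun i => α i c) (a + 1) c
      = ∑ k ∈ range (p + 1), α (a + 1 + (k : ZMod n)) c := by
    have h1 : (c - (a + 1)).val + 1 = p + 1 := by
      have hh : c - (a + 1) = (c - a) - 1 := by ring
      rw [hh, val_sub_one _ hca, hp]; omega
    simp only [csum, h1]
  have C2 : csum (fun i => α i c) (c + 1) a
      = ∑ l ∈ range (n - (p + 1)), α (c + 1 + (l : ZMod n)) c := by
    have hac' : a - c ≠ 0 := sub_ne_zero.mpr hac
    have e4 : (a - c).val = n - (p + 1) := by
      have hh : a - c = -(c - a) := by ring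
      rw [hh, ZMod.neg_val, if_neg hca, hp]
    have h2 : (a - (c + 1)).val + 1 = n - (p + 1) := by
      have hh : a - (c + 1) = (a - c) - 1 := by ring
      rw [hh, val_sub_one _ hac', e4]; omega
    simp only [csum, h2]
  have D0' : dd α a c = (∑ k ∈ range p, ∑ l ∈ range (n - (p + 1)),
        α (a + 1 + (k : ZMod n)) (c + 1 + (l : ZMod n)))
      + ∑ l ∈ range (n - (p + 1)), α c (c + 1 + (l : ZMod n)) := by
    rw [D0, Finset.sum_range_succ, hlast]
  have D1' : dd α a (c - 1) = (∑ k ∈ range p, ∑ l ∈ range (n - (p + 1)),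
        α (a + 1 + (k : ZMod n)) (c + 1 + (l : ZMod n)))
      + ∑ k ∈ range p, α (a + 1 + (k : ZMod n)) c := by
    rw [D1, ← Finset.sum_add_distrib]
    refine Finset.sum_congr rfl (fun k _ => ?_)
    rw [Finset.sum_range_succ']
    congr 1
    · refine Finset.sum_congr rfl (fun l _ => ?_)
      congr 1
      push_cast
      ring
    · simp
  have C1' : csum (fun i => α i c) (a + 1) c
      = ∑ k ∈ range p, α (a + 1 + (k : ZMod n)) c := by
    rw [C1, Finset.sum_range_succ, hlast, hdiag, add_zero]
  have C2' : csum (fun i => α i c) (c + 1) a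
      = ∑ l ∈ range (n - (p + 1)), α c (c + 1 + (l : ZMod n)) := by
    rw [C2]; exact Finset.sum_congr rfl (fun l _ => hsym _ _)
  rw [D0', D1', C1', C2']
  ring

theorem stmt4 {n : ℕ} [NeZero n] (α : ZMod n → ZMod n → ℝ)
    (hnn : ∀ i j, 0 ≤ α i j) (hsym : ∀ i j, α i j = α j i) (hdiag : ∀ i, α i i = 0)
    (a c : ZMod n) (hac : a ≠ c) :
    dd α a (c - 1) ≤ dd α a c ↔
      csum (fun i => α i c) (a + 1) c ≤ csum (fun i => α i c) (c + 1) a := by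
  have := key α hsym hdiag a c hac
  constructor <;> intro h <;> linarith
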